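/- Let (R, m) be a local commutative ring with identity 1 ≠ 0 whose maximal ideal m is not a principal ideal. If the intersection graph Γ(R) is triangle-free (it contains no three pairwise adjacent vertices), then m² = 0. -/
import Mathlib

open IsLocalRing Ideal

private lemma aux_ne_bot {R : Type*} [CommRing R] {I : Ideal R} {x : R}
    (hx : x ∈ I) (h0 : x ≠ 0) : I ≠ ⊥ := by
  intro h
  subst h
  exact h0 ((Submodule.mem_bot R).mp hx)

/-- If `a * b ≠ 0` and `b` is in the maximal ideal, then `span {a*b} ≠ span {a}`. -/
private lemma aux_span_ne {R : Type*} [CommRing R] [IsLocalRing R]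
    {a b : R} (hb : b ∈ maximalIdeal R) (hab : a * b ≠ 0) :
    Ideal.span {a * b} ≠ Ideal.span {a} := by
  intro h
  have haM : a ∈ Ideal.span {a * b} := by
    rw [h]; exact Ideal.mem_span_singleton_self a
  rw [Ideal.mem_span_singleton] at haM
  obtain ⟨r, hr⟩ := haM
  have key : a * (1 - b * r) = 0 := by
    linear_combination hr
  have hu : IsUnit (1 - b * r) := by
    rcases IsLocalRing.isUnit_or_isUnit_one_sub_self (b * r) with h1 | h1
    · exact absurd h1 ((IsLocalRing.mem_maximalIdeal _).mp ((maximalIdeal R).mul_mem_right r hb))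
    · exact h1
  have ha0 : a = 0 := by
    have := hu.mul_left_eq_zero.mp key
    exact this
  exact hab (by rw [ha0, zero_mul])

/-- Case where some element of the maximal ideal has nonzero square. -/
private lemma aux_sq_case {R : Type*} [CommRing R] [IsLocalRing R]
    (h_not_principal : ¬ (IsLocalRing.maximalIdeal R).IsPrincipal)
    (h_triangle_free : ¬ ∃ I J K : Ideal R,
      (I ≠ ⊥ ∧ I ≠ ⊤) ∧ (J ≠ ⊥ ∧ J ≠ ⊤) ∧ (K ≠ ⊥ ∧ K ≠ ⊤) ∧
      I ≠ J ∧ J ≠ K ∧ I ≠ K ∧ I ⊓ J ≠ ⊥ ∧ J ⊓ K ≠ ⊥ ∧ I ⊓ K ≠ ⊥)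
    {a : R} (ha : a ∈ maximalIdeal R) (ha2 : a * a ≠ 0) : False := by
  have hmtop : maximalIdeal R ≠ ⊤ := (maximalIdeal.isMaximal R).ne_top
  have ha0 : a ≠ 0 := by rintro rfl; exact ha2 (zero_mul 0)
  have hIa_le : Ideal.span {a} ≤ maximalIdeal R := by
    rw [Ideal.span_le, Set.singleton_subset_iff]; exact ha
  have hIa_ne : Ideal.span {a} ≠ maximalIdeal R := by
    intro h; exact h_not_principal ⟨a, h.symm⟩
  obtain ⟨c, hcm, hca⟩ := SetLike.exists_of_lt (lt_of_le_of_ne hIa_le hIa_ne)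
  have hc0 : c ≠ 0 := by rintro rfl; exact hca (Ideal.zero_mem _)
  by_cases hac : a * c = 0
  · -- triangle: span {a}, span {a+c}, maximalIdeal R
    apply h_triangle_free
    refine ⟨Ideal.span {a}, Ideal.span {a + c}, maximalIdeal R, ?_, ?_, ?_, ?_, ?_, ?_, ?_, ?_, ?_⟩
    · exact ⟨aux_ne_bot (Ideal.mem_span_singleton_self a) ha0,
        ne_top_of_le_ne_top hmtop hIa_le⟩
    · have hacm : a + c ∈ maximalIdeal R := (maximalIdeal R).add_mem ha hcm
      have hac0 : a + c ≠ 0 := by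
        intro h
        apply hca
        have hc' : c = -a := by linear_combination h
        rw [hc']
        exact (Ideal.span {a}).neg_mem (Ideal.mem_span_singleton_self a)
      exact ⟨aux_ne_bot (Ideal.mem_span_singleton_self _) hac0,
        ne_top_of_le_ne_top hmtop (by rw [Ideal.span_le, Set.singleton_subset_iff]; exact hacm)⟩
    · refine ⟨?_, hmtop⟩
      intro h; exact h_not_principal ⟨0, h.trans (Ideal.span_singleton_eq_bot.mpr rfl).symm⟩
    · intro h
      apply hca
      have : a + c ∈ Ideal.span {a} := by
        rw [h]; exact Ideal.mem_span_singleton_self _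
      have := (Ideal.span {a}).sub_mem this (Ideal.mem_span_singleton_self a)
      simpa using this
    · intro h; exact h_not_principal ⟨a + c, h.symm⟩
    · intro h; exact h_not_principal ⟨a, h.symm⟩
    · -- span{a} ⊓ span{a+c} contains a*(a+c) = a*a ≠ 0
      apply aux_ne_bot (x := a * a)
      · rw [Ideal.mem_inf]
        constructor
        · exact Ideal.mem_span_singleton.mpr ⟨a, rfl⟩
        · exact Ideal.mem_span_singleton.mpr ⟨a, by linear_combination -hac⟩
      · exact ha2
    · apply aux_ne_bot (x := a + c)
      · rw [Ideal.mem_inf]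
        exact ⟨Ideal.mem_span_singleton_self _, (maximalIdeal R).add_mem ha hcm⟩
      · intro h
        apply hca
        have hc' : c = -a := by linear_combination h
        rw [hc']
        exact (Ideal.span {a}).neg_mem (Ideal.mem_span_singleton_self a)
    · apply aux_ne_bot (x := a)
      · rw [Ideal.mem_inf]; exact ⟨Ideal.mem_span_singleton_self a, ha⟩
      · exact ha0
  · -- triangle: span {a}, span {c}, span {a*c}
    apply h_triangle_free
    refine ⟨Ideal.span {a}, Ideal.span {c}, Ideal.span {a * c}, ?_, ?_, ?_, ?_, ?_, ?_, ?_, ?_, ?_⟩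
    · exact ⟨aux_ne_bot (Ideal.mem_span_singleton_self a) ha0,
        ne_top_of_le_ne_top hmtop hIa_le⟩
    · exact ⟨aux_ne_bot (Ideal.mem_span_singleton_self c) hc0,
        ne_top_of_le_ne_top hmtop (by rw [Ideal.span_le, Set.singleton_subset_iff]; exact hcm)⟩
    · refine ⟨aux_ne_bot (Ideal.mem_span_singleton_self _) hac, ?_⟩
      refine ne_top_of_le_ne_top hmtop ?_
      rw [Ideal.span_le, Set.singleton_subset_iff]
      exact (maximalIdeal R).mul_mem_right c ha
    · intro h
      exact hca (h ▸ Ideal.mem_span_singleton_self c)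
    · intro h
      apply aux_span_ne (a := c) (b := a) ha (by rwa [mul_comm])
      rw [mul_comm]; exact h.symm
    · intro h
      exact aux_span_ne hcm hac h.symm
    · apply aux_ne_bot (x := a * c)
      · rw [Ideal.mem_inf]
        exact ⟨Ideal.mem_span_singleton.mpr ⟨c, rfl⟩,
          Ideal.mem_span_singleton.mpr ⟨a, (mul_comm a c)⟩⟩
      · exact hac
    · apply aux_ne_bot (x := a * c)
      · rw [Ideal.mem_inf]
        exact ⟨Ideal.mem_span_singleton.mpr ⟨a, (mul_comm a c)⟩,
          Ideal.mem_span_singleton_self _⟩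
      · exact hac
    · apply aux_ne_bot (x := a * c)
      · rw [Ideal.mem_inf]
        exact ⟨Ideal.mem_span_singleton.mpr ⟨c, rfl⟩, Ideal.mem_span_singleton_self _⟩
      · exact hac

/-- Let `(R, m)` be a local commutative ring with `1 ≠ 0` whose maximal
ideal `m` is not principal.  If the intersection graph `Γ(R)` is triangle-free, then
`m² = 0`. -/
theorem maximalIdeal_sq_eq_bot_of_triangleFree
    (R : Type*) [CommRing R] [IsLocalRing R]
    (h_not_principal : ¬ (IsLocalRing.maximalIdeal R).IsPrincipal)
    (h_triangle_free : ¬ ∃ I J K : Ideal R,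
      (I ≠ ⊥ ∧ I ≠ ⊤) ∧ (J ≠ ⊥ ∧ J ≠ ⊤) ∧ (K ≠ ⊥ ∧ K ≠ ⊤) ∧
      I ≠ J ∧ J ≠ K ∧ I ≠ K ∧ I ⊓ J ≠ ⊥ ∧ J ⊓ K ≠ ⊥ ∧ I ⊓ K ≠ ⊥) :
    IsLocalRing.maximalIdeal R ^ 2 = ⊥ := by
  by_contra hm2
  have hmtop : maximalIdeal R ≠ ⊤ := (maximalIdeal.isMaximal R).ne_top
  have hex : ¬ ∀ a ∈ maximalIdeal R, ∀ b ∈ maximalIdeal R, a * b = 0 := by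
    intro h
    apply hm2
    rw [pow_two, eq_bot_iff]
    exact Submodule.mul_le.mpr fun x hx y hy => by
      rw [h x hx y hy]; exact Submodule.zero_mem _
  push_neg at hex
  obtain ⟨a, ha, b, hb, hab⟩ := hex
  by_cases hba : b ∈ Ideal.span {a}
  · obtain ⟨r, hr⟩ := Ideal.mem_span_singleton.mp hba
    apply aux_sq_case h_not_principal h_triangle_free ha
    intro h
    exact hab (by rw [hr, ← mul_assoc, h, zero_mul])
  · by_cases hab' : a ∈ Ideal.span {b}
    · obtain ⟨r, hr⟩ := Ideal.mem_span_singleton.mp hab'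
      apply aux_sq_case h_not_principal h_triangle_free hb
      intro h
      exact hab (by rw [mul_comm, hr, ← mul_assoc, h, zero_mul])
    · -- triangle: span {a}, span {b}, span {a*b}
      have ha0 : a ≠ 0 := by rintro rfl; exact hab (zero_mul b)
      have hb0 : b ≠ 0 := by rintro rfl; exact hab (mul_zero a)
      apply h_triangle_free
      refine ⟨Ideal.span {a}, Ideal.span {b}, Ideal.span {a * b}, ?_, ?_, ?_, ?_, ?_, ?_, ?_, ?_, ?_⟩
      · exact ⟨aux_ne_bot (Ideal.mem_span_singleton_self a) ha0,
          ne_top_of_le_ne_top hmtop (by rw [Ideal.span_le, Set.singleton_subset_iff]; exact ha)⟩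
      · exact ⟨aux_ne_bot (Ideal.mem_span_singleton_self b) hb0,
          ne_top_of_le_ne_top hmtop (by rw [Ideal.span_le, Set.singleton_subset_iff]; exact hb)⟩
      · exact ⟨aux_ne_bot (Ideal.mem_span_singleton_self _) hab,
          ne_top_of_le_ne_top hmtop (by
            rw [Ideal.span_le, Set.singleton_subset_iff]
            exact (maximalIdeal R).mul_mem_right b ha)⟩
      · intro h; exact hba (h ▸ Ideal.mem_span_singleton_self b)
      · intro h
        apply aux_span_ne (a := b) (b := a) ha (by rwa [mul_comm])
        rw [mul_comm]; exact h.symm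
      · intro h; exact aux_span_ne hb hab h.symm
      · apply aux_ne_bot (x := a * b)
        · rw [Ideal.mem_inf]
          exact ⟨Ideal.mem_span_singleton.mpr ⟨b, rfl⟩,
            Ideal.mem_span_singleton.mpr ⟨a, (mul_comm a b)⟩⟩
        · exact hab
      · apply aux_ne_bot (x := a * b)
        · rw [Ideal.mem_inf]
          exact ⟨Ideal.mem_span_singleton.mpr ⟨a, (mul_comm a b)⟩,
            Ideal.mem_span_singleton_self _⟩
        · exact hab
      · apply aux_ne_bot (x := a * b)
        · rw [Ideal.mem_inf]
          exact ⟨Ideal.mem_span_singleton.mpr ⟨b, rfl⟩, Ideal.mem_span_singleton_self _⟩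
        · exact hab
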